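/- Let C be a definable, closed and bounded subset of M^m and let φ, ψ : C → M_{>0} be two definable functions such that for every x ∈ C there exists δ > 0 with φ(x') ≥ ψ(x) for all x' ∈ C with |x'−x| < δ. Then inf φ(C) > 0. -/

import Mathlib

open Set

/-- The projection of `M^{m+n}` onto the first `m` coordinates. -/
def pFst {M : Type*} {m n : ℕ} (z : Fin (m + n) → M) : Fin m → M :=
  fun i => z (Fin.castAdd n i)

/-- The projection of `M^{m+n}` onto the last `n` coordinates. -/
def pSnd {M : Type*} {m n : ℕ} (z : Fin (m + n) → M) : Fin n → M :=
  fun j => z (Fin.natAdd m j)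

/-- The family of sets definable with parameters in an expansion `𝓜 = (M,<,…)` of a
linear order: a van den Dries-style structure on `M` containing the graph of `<`. -/
structure OrdStruc (M : Type*) [LinearOrder M] where
  defin : ∀ {n : ℕ}, Set (Fin n → M) → Prop
  defin_union : ∀ {n : ℕ} {A B : Set (Fin n → M)}, defin A → defin B → defin (A ∪ B)
  defin_compl : ∀ {n : ℕ} {A : Set (Fin n → M)}, defin A → defin Aᶜ
  defin_empty : ∀ {n : ℕ}, defin (∅ : Set (Fin n → M))
  defin_cylinder : ∀ {n : ℕ} {A : Set (Fin n → M)}, defin A →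
    defin {z : Fin (n + 1) → M | Fin.init z ∈ A}
  defin_proj : ∀ {n : ℕ} {A : Set (Fin (n + 1) → M)}, defin A →
    defin ((fun z : Fin (n + 1) → M => Fin.init z) '' A)
  defin_perm : ∀ {n : ℕ} (σ : Equiv.Perm (Fin n)) {A : Set (Fin n → M)}, defin A →
    defin {z : Fin n → M | z ∘ σ ∈ A}
  defin_lt : defin {z : Fin 2 → M | z 0 < z 1}
  defin_eq : defin {z : Fin 2 → M | z 0 = z 1}
  defin_const : ∀ a : M, defin {z : Fin 1 → M | z 0 = a}

/-- The definable sets of an expansion `𝓜 = (M,<,0,+,…)` of an ordered abelian group. -/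
structure GrpStruc (M : Type*) [AddCommGroup M] [LinearOrder M] [IsOrderedAddMonoid M] extends OrdStruc M where
  defin_add : defin {z : Fin 3 → M | z 0 + z 1 = z 2}

/-- The definable sets of an expansion `𝓕 = (F,<,+,0,·,1,…)` of an ordered field. -/
structure FieldStruc (M : Type*) [Field M] [LinearOrder M] [IsStrictOrderedRing M] extends GrpStruc M where
  defin_mul : defin {z : Fin 3 → M | z 0 * z 1 = z 2}

namespace OrdStruc

variable {M : Type*} [LinearOrder M]

/-- A subset of `M` is definable. -/
def defin1 (S : OrdStruc M) (A : Set M) : Prop :=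
  S.defin {z : Fin 1 → M | z 0 ∈ A}

/-- The function `f : C → M`, `C ⊆ M^m`, is definable: its graph over `C` is definable. -/
def DefinableFunOn (S : OrdStruc M) {m : ℕ} (C : Set (Fin m → M))
    (f : (Fin m → M) → M) : Prop :=
  S.defin {z : Fin (m + 1) → M | Fin.init z ∈ C ∧ z (Fin.last m) = f (Fin.init z)}

/-- The map `f : C → M^k`, `C ⊆ M^m`, is definable: its graph over `C` is definable. -/
def DefinableMapOn (S : OrdStruc M) {m k : ℕ} (C : Set (Fin m → M))
    (f : (Fin m → M) → Fin k → M) : Prop :=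
  S.defin {z : Fin (m + k) → M | pFst z ∈ C ∧ pSnd z = f (pFst z)}

/-- The two-variable function `f : C × P → M` is definable. -/
def DefinableFun2On (S : OrdStruc M) {m n : ℕ} (C : Set (Fin m → M))
    (P : Set (Fin n → M)) (f : (Fin m → M) → (Fin n → M) → M) : Prop :=
  S.defin {z : Fin (m + n + 1) → M |
    pFst (Fin.init z) ∈ C ∧ pSnd (Fin.init z) ∈ P ∧
    z (Fin.last (m + n)) = f (pFst (Fin.init z)) (pSnd (Fin.init z))}

/-- A definable family of functions `{f_t : C → M}_{t ∈ I}` given by `F(x,t) = f_t(x)`. -/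
def DefinableFamilyOn (S : OrdStruc M) {m : ℕ} (C : Set (Fin m → M)) (I : Set M)
    (F : (Fin m → M) → M → M) : Prop :=
  S.defin {z : Fin (m + 1 + 1) → M |
    Fin.init (Fin.init z) ∈ C ∧ Fin.init z (Fin.last m) ∈ I ∧
    z (Fin.last (m + 1)) = F (Fin.init (Fin.init z)) (Fin.init z (Fin.last m))}

end OrdStruc

/-- `𝓜` is definably complete: every definable subset of `M` has a supremum and an
infimum in `M ∪ {±∞}`. -/
def DefinablyComplete {M : Type*} [LinearOrder M] (S : OrdStruc M) : Prop :=
  ∀ A : Set M, S.defin1 A → A.Nonempty →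
    (BddAbove A → ∃ a, IsLUB A a) ∧ (BddBelow A → ∃ a, IsGLB A a)

/-- `𝓜` is locally o-minimal: for every definable `A ⊆ M` and every `a ∈ M` there is an
open interval `I ∋ a` such that `A ∩ I` is a finite union of points and open intervals. -/
def LocallyOMinimal {M : Type*} [LinearOrder M] (S : OrdStruc M) : Prop :=
  ∀ A : Set M, S.defin1 A → ∀ a : M, ∃ b c : M, b < a ∧ a < c ∧
    ∃ (s : Finset M) (t : Finset (M × M)),
      A ∩ Set.Ioo b c = (↑s : Set M) ∪ ⋃ p ∈ t, Set.Ioo p.1 p.2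

/-- Open intervals of `M` (with possibly infinite endpoints). -/
def IsOpenInterval {M : Type*} [LinearOrder M] (I : Set M) : Prop :=
  (∃ a b : M, I = Set.Ioo a b) ∨ (∃ a : M, I = Set.Ioi a) ∨
    (∃ b : M, I = Set.Iio b) ∨ I = Set.univ

/-- Open boxes in `M^n`: products of `n` open intervals. -/
def IsOpenBox {M : Type*} [LinearOrder M] {n : ℕ} (B : Set (Fin n → M)) : Prop :=
  ∃ I : Fin n → Set M, (∀ i, IsOpenInterval (I i)) ∧ B = Set.pi Set.univ I

/-- Some coordinate projection of `X ⊆ M^n` onto `M^d` has an image with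
nonempty interior. -/
def HasDimAtLeast {M : Type*} [TopologicalSpace M] {n : ℕ}
    (X : Set (Fin n → M)) (d : ℕ) : Prop :=
  ∃ ι : Fin d → Fin n, Function.Injective ι ∧
    (interior ((fun x : Fin n → M => x ∘ ι) '' X)).Nonempty

open Classical in
/-- The dimension of a subset of `M^n`: the largest `d` such that some coordinate
projection onto `M^d` has an image with nonempty interior; `⊥` (i.e. `-∞`) for `∅`. -/
noncomputable def sdim {M : Type*} [TopologicalSpace M] {n : ℕ}
    (X : Set (Fin n → M)) : WithBot ℕ :=
  if X.Nonempty then (Nat.findGreatest (HasDimAtLeast X) n : WithBot ℕ) else ⊥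

/-- `|x| = max_{1 ≤ i ≤ n} |x_i|`. -/
def vnorm {M : Type*} [AddCommGroup M] [LinearOrder M] [IsOrderedAddMonoid M] {n : ℕ} (x : Fin n → M) : M :=
  (List.ofFn fun i => |x i|).foldr max 0

/-- A subset of `M^n` is bounded. -/
def VBdd {M : Type*} [AddCommGroup M] [LinearOrder M] [IsOrderedAddMonoid M] {n : ℕ} (A : Set (Fin n → M)) : Prop :=
  ∃ r : M, ∀ x ∈ A, vnorm x < r

/-- The box `𝓑_n(x, ε) = {y : |x_i - y_i| < ε for all i}`. -/
def vball {M : Type*} [AddCommGroup M] [LinearOrder M] [IsOrderedAddMonoid M] {n : ℕ} (x : Fin n → M) (ε : M) :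
    Set (Fin n → M) :=
  {y | ∀ i, |x i - y i| < ε}

/-- `fib(X, π, x) = {y ∈ M^e : (x,y) ∈ X}`, where `π : M^{d+e} → M^d` is the
projection onto the first `d` coordinates. -/
def fibAt {M : Type*} {d e : ℕ} (X : Set (Fin (d + e) → M)) (x : Fin d → M) :
    Set (Fin e → M) :=
  {y | Fin.append x y ∈ X}

/-- `X ⊆ M^{d+e}` is a `π`-special submanifold, `π` the projection onto the first `d`
coordinates: for every `x ∈ M^d` there are an open box `U ∋ x` and mutually disjoint
open boxes `V_y` (`y ∈ fib(X,π,x)`) with `π(V_y) = U`, covering `X ∩ π⁻¹(U)` and such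
that each `V_y ∩ X` is the graph of a continuous map on `U`. -/
def SpecialFirst {M : Type*} [LinearOrder M] [TopologicalSpace M] {d e : ℕ}
    (X : Set (Fin (d + e) → M)) : Prop :=
  ∀ x : Fin d → M, ∃ U : Set (Fin d → M), IsOpenBox U ∧ x ∈ U ∧
    ∃ V : (Fin e → M) → Set (Fin (d + e) → M),
      (∀ y ∈ fibAt X x, IsOpenBox (V y)) ∧
      (∀ y ∈ fibAt X x, ∀ y' ∈ fibAt X x, y ≠ y' → V y ∩ V y' = ∅) ∧
      (∀ y ∈ fibAt X x, pFst '' V y = U) ∧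
      (∀ z ∈ X, pFst z ∈ U → ∃ y ∈ fibAt X x, z ∈ V y) ∧
      (∀ y ∈ fibAt X x, ∃ g : (Fin d → M) → Fin e → M,
        ContinuousOn g U ∧ V y ∩ X = (fun u => Fin.append u (g u)) '' U)

/-- `X ⊆ M^{d+e}` is a `π`-quasi-special submanifold: like `SpecialFirst` but only for
`x ∈ π(X)` and without the covering condition (2). -/
def QuasiSpecialFirst {M : Type*} [LinearOrder M] [TopologicalSpace M] {d e : ℕ}
    (X : Set (Fin (d + e) → M)) : Prop :=
  ∀ x ∈ pFst '' X, ∃ U : Set (Fin d → M), IsOpenBox U ∧ x ∈ U ∧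
    ∃ V : (Fin e → M) → Set (Fin (d + e) → M),
      (∀ y ∈ fibAt X x, IsOpenBox (V y)) ∧
      (∀ y ∈ fibAt X x, ∀ y' ∈ fibAt X x, y ≠ y' → V y ∩ V y' = ∅) ∧
      (∀ y ∈ fibAt X x, pFst '' V y = U) ∧
      (∀ y ∈ fibAt X x, ∃ g : (Fin d → M) → Fin e → M,
        ContinuousOn g U ∧ V y ∩ X = (fun u => Fin.append u (g u)) '' U)

/-- `C ⊆ M^n` is a special submanifold: it is a `π`-special submanifold for some
coordinate projection `π : M^n → M^d` (obtained by permuting coordinates and then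
projecting onto the first `d` coordinates). -/
def IsSpecial {M : Type*} [LinearOrder M] [TopologicalSpace M] {n : ℕ}
    (C : Set (Fin n → M)) : Prop :=
  ∃ (d e : ℕ) (σ : Fin n ≃ Fin (d + e)),
    SpecialFirst {z : Fin (d + e) → M | z ∘ σ ∈ C}

/-- `(X, π)` is locally bounded at `x ∈ π(X)`. -/
def LocBddAt {M : Type*} [AddCommGroup M] [LinearOrder M] [IsOrderedAddMonoid M] {d e : ℕ}
    (X : Set (Fin (d + e) → M)) (x : Fin d → M) : Prop :=
  ∃ U : Set (Fin d → M), IsOpenBox U ∧ VBdd U ∧ x ∈ U ∧ VBdd {z ∈ X | pFst z ∈ U}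

/-- `(X, π, T, η, ρ)` is a special submanifold with a tubular neighborhood (the data
`T`, `η`, `ρ` over the special submanifold `X`), `π` projection onto first `d` coords. -/
def TubularFirst {M : Type*} [AddCommGroup M] [LinearOrder M] [IsOrderedAddMonoid M] [TopologicalSpace M] {d e : ℕ}
    (S : GrpStruc M) (X T : Set (Fin (d + e) → M))
    (η : (Fin d → M) → M) (ρ : (Fin (d + e) → M) → Fin (d + e) → M) : Prop :=
  (sdim X = ((d + e : ℕ) : WithBot ℕ) ∧ IsOpen X ∧ T = X ∧ (∀ u, η u = 0) ∧
    ∀ z ∈ X, ρ z = z) ∨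
  (sdim X < ((d + e : ℕ) : WithBot ℕ) ∧
    -- (a)
    S.defin T ∧ IsOpen T ∧ T ⊆ {z | pFst z ∈ pFst '' X} ∧
    -- (b)
    S.toOrdStruc.DefinableFunOn (pFst '' X) η ∧ ContinuousOn η (pFst '' X) ∧
    (∀ u ∈ pFst '' X, 0 < η u) ∧ (∃ r : M, ∀ u ∈ pFst '' X, η u < r) ∧
    (∀ u ∈ pFst '' X, fibAt T u = ⋃ x ∈ fibAt X u, vball x (η u)) ∧
    (∀ u ∈ pFst '' X, ∀ x₁ ∈ fibAt X u, ∀ x₂ ∈ fibAt X u, x₁ ≠ x₂ →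
      vball x₁ (η u) ∩ vball x₂ (η u) = ∅) ∧
    -- (c)
    S.toOrdStruc.DefinableMapOn T ρ ∧ ContinuousOn ρ T ∧
    (∀ z ∈ T, ρ z ∈ X) ∧ (∀ z ∈ X, ρ z = z) ∧
    (∀ u : Fin d → M, ρ '' {z ∈ T | pFst z = u} ⊆ {z ∈ X | pFst z = u}) ∧
    (∀ u ∈ pFst '' X, ∀ x ∈ fibAt X u, ∀ y ∈ vball x (η u),
      ρ (Fin.append u y) = Fin.append u x))

section Toolkit

namespace OrdStruc

variable {M : Type*} [LinearOrder M] (S : OrdStruc M)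

theorem defin_inter {n : ℕ} {A B : Set (Fin n → M)} (hA : S.defin A) (hB : S.defin B) :
    S.defin (A ∩ B) := by
  have h := S.defin_compl (S.defin_union (S.defin_compl hA) (S.defin_compl hB))
  rwa [Set.compl_union, compl_compl, compl_compl] at h

theorem defin_univ {n : ℕ} : S.defin (Set.univ : Set (Fin n → M)) := by
  have h := S.defin_compl (S.defin_empty (n := n))
  rwa [Set.compl_empty] at h

theorem defin_castLE {n : ℕ} {A : Set (Fin n → M)} (hA : S.defin A) :
    ∀ (N : ℕ) (h : n ≤ N), S.defin {z : Fin N → M | (fun i => z (Fin.castLE h i)) ∈ A} := by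
  refine Nat.le_induction ?_ ?_
  · have : {z : Fin n → M | (fun i => z (Fin.castLE le_rfl i)) ∈ A} = A := by
      ext z
      have hz : (fun i => z (Fin.castLE le_rfl i)) = z := funext fun i => congrArg z (Fin.ext rfl)
      simp [hz]
    rw [this]; exact hA
  · intro N hN ih
    have hcyl := S.defin_cylinder ih
    have heq : {z : Fin (N + 1) → M | Fin.init z ∈
        {w : Fin N → M | (fun i => w (Fin.castLE hN i)) ∈ A}}
        = {z : Fin (N + 1) → M | (fun i => z (Fin.castLE (Nat.le_succ_of_le hN) i)) ∈ A} := by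
      ext z
      have hz : (fun i => Fin.init z (Fin.castLE hN i))
          = fun i => z (Fin.castLE (Nat.le_succ_of_le hN) i) :=
        funext fun i => congrArg z (Fin.ext rfl)
      simp only [Set.mem_setOf_eq]
      rw [show (fun i => Fin.init z (Fin.castLE hN i))
          = fun i => z (Fin.castLE (Nat.le_succ_of_le hN) i) from hz]
    rw [heq] at hcyl
    exact hcyl

theorem exists_perm_extend {n N : ℕ} (h : n ≤ N) (ρ : Fin n → Fin N)
    (hρ : Function.Injective ρ) :
    ∃ σ : Equiv.Perm (Fin N), ∀ i, σ (Fin.castLE h i) = ρ i := by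
  classical
  set f : Fin n → Fin N := Fin.castLE h with hf
  have hfinj : Function.Injective f := Fin.castLE_injective h
  let e1 : Fin n ≃ Set.range f := Equiv.ofInjective f hfinj
  let e2 : Fin n ≃ Set.range ρ := Equiv.ofInjective ρ hρ
  have hcard : Fintype.card ↥(Set.range f)ᶜ = Fintype.card ↥(Set.range ρ)ᶜ := by
    rw [Fintype.card_compl_set, Fintype.card_compl_set,
      Set.card_range_of_injective hfinj, Set.card_range_of_injective hρ]
  let ec : ↥(Set.range f)ᶜ ≃ ↥(Set.range ρ)ᶜ := Fintype.equivOfCardEq hcard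
  let σ : Equiv.Perm (Fin N) :=
    ((Equiv.sumCompl (· ∈ Set.range f)).symm.trans
      (Equiv.sumCongr (e1.symm.trans e2) ec)).trans (Equiv.sumCompl (· ∈ Set.range ρ))
  refine ⟨σ, fun i => ?_⟩
  have h1 : (Equiv.sumCompl (· ∈ Set.range f)).symm (f i)
      = Sum.inl ⟨f i, Set.mem_range_self i⟩ := by
    rw [Equiv.symm_apply_eq, Equiv.sumCompl_apply_inl]
  have h2 : e1.symm ⟨f i, Set.mem_range_self i⟩ = i := by
    rw [Equiv.symm_apply_eq, Equiv.ofInjective_apply]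
  show (Equiv.sumCompl (· ∈ Set.range ρ))
      ((Equiv.sumCongr (e1.symm.trans e2) ec)
        ((Equiv.sumCompl (· ∈ Set.range f)).symm (f i))) = ρ i
  rw [h1]
  simp only [Equiv.sumCongr_apply, Sum.map_inl, Equiv.trans_apply, h2]
  rw [Equiv.ofInjective_apply, Equiv.sumCompl_apply_inl]

theorem defin_pull {n N : ℕ} (ρ : Fin n → Fin N) (hρ : Function.Injective ρ)
    {A : Set (Fin n → M)} (hA : S.defin A) :
    S.defin {z : Fin N → M | (fun i => z (ρ i)) ∈ A} := by
  have h : n ≤ N := by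
    have := Fintype.card_le_of_injective ρ hρ
    simpa using this
  obtain ⟨σ, hσ⟩ := exists_perm_extend h ρ hρ
  have hB := S.defin_castLE hA N h
  have hperm := S.defin_perm σ hB
  have heq : {z : Fin N → M | z ∘ σ ∈
      {w : Fin N → M | (fun i => w (Fin.castLE h i)) ∈ A}}
      = {z : Fin N → M | (fun i => z (ρ i)) ∈ A} := by
    ext z
    simp only [Set.mem_setOf_eq, Function.comp]
    rw [show (fun i => z (σ (Fin.castLE h i))) = fun i => z (ρ i) from
      funext fun i => congrArg z (hσ i)]
  rw [heq] at hperm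
  exact hperm

theorem defin_exists (S : OrdStruc M) : ∀ {n k : ℕ} {A : Set (Fin (n + k) → M)}, S.defin A →
    S.defin {y : Fin n → M | ∃ w : Fin k → M, Fin.append y w ∈ A}
  | n, 0, A, hA => by
    have heq : {y : Fin n → M | ∃ w : Fin 0 → M, Fin.append y w ∈ A} = A := by
      ext y
      constructor
      · rintro ⟨w, hw⟩
        have hw0 : w = Fin.elim0 := funext fun i => i.elim0
        rw [hw0, Fin.append_elim0] at hw
        have : y ∘ Fin.cast (Nat.add_zero n) = y := funext fun i => congrArg y (Fin.ext rfl)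
        rwa [this] at hw
      · intro hy
        refine ⟨Fin.elim0, ?_⟩
        rw [Fin.append_elim0]
        have : y ∘ Fin.cast (Nat.add_zero n) = y := funext fun i => congrArg y (Fin.ext rfl)
        rwa [this]
    rw [heq]; exact hA
  | n, (k+1), A, hA => by
    have hproj := S.defin_proj hA
    have hchar : ((fun z : Fin (n + k + 1) → M => Fin.init z) '' A)
        = {y : Fin (n + k) → M | ∃ a : M, Fin.snoc y a ∈ A} := by
      ext y
      constructor
      · rintro ⟨z, hz, rfl⟩
        refine ⟨z (Fin.last _), ?_⟩
        show Fin.snoc (Fin.init z) (z (Fin.last _)) ∈ A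
        rw [Fin.snoc_init_self]; exact hz
      · rintro ⟨a, ha⟩
        exact ⟨Fin.snoc y a, ha, Fin.init_snoc _ _⟩
    have hproj' : S.defin {y : Fin (n + k) → M | ∃ a : M, Fin.snoc y a ∈ A} := by
      rw [← hchar]; exact hproj
    have hih := S.defin_exists (n := n) (k := k) hproj'
    have heq : {y : Fin n → M | ∃ w : Fin k → M, Fin.append y w ∈
        {y' : Fin (n + k) → M | ∃ a : M, Fin.snoc y' a ∈ A}}
        = {y : Fin n → M | ∃ w : Fin (k+1) → M, Fin.append y w ∈ A} := by
      ext y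
      constructor
      · rintro ⟨w, a, hw⟩
        exact ⟨Fin.snoc w a, by rwa [Fin.append_snoc]⟩
      · rintro ⟨w, hw⟩
        refine ⟨Fin.init w, w (Fin.last k), ?_⟩
        rw [← Fin.append_snoc, Fin.snoc_init_self]
        exact hw
    rw [heq] at hih
    exact hih

theorem defin_coordLt {N : ℕ} (i j : Fin N) (hij : i ≠ j) :
    S.defin {z : Fin N → M | z i < z j} := by
  have hinj : Function.Injective ![i, j] := by
    intro a b hab
    fin_cases a <;> fin_cases b <;> simp_all
  have h := S.defin_pull ![i, j] hinj S.defin_lt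
  have heq : {z : Fin N → M | (fun t => z (![i, j] t)) ∈ {w : Fin 2 → M | w 0 < w 1}}
      = {z : Fin N → M | z i < z j} := by
    ext z; simp
  rwa [heq] at h

theorem defin_coordEqConst {N : ℕ} (i : Fin N) (a : M) :
    S.defin {z : Fin N → M | z i = a} := by
  have hinj : Function.Injective ![i] := fun x y _ => Subsingleton.elim x y
  have h := S.defin_pull ![i] hinj (S.defin_const a)
  have heq : {z : Fin N → M | (fun t => z (![i] t)) ∈ {w : Fin 1 → M | w 0 = a}}
      = {z : Fin N → M | z i = a} := by
    ext z; simp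
  rwa [heq] at h

theorem defin_forall_lt {N : ℕ} (k : ℕ) (P : ℕ → Set (Fin N → M))
    (hP : ∀ i, i < k → S.defin (P i)) :
    S.defin {z : Fin N → M | ∀ i, i < k → z ∈ P i} := by
  induction k with
  | zero =>
    have : {z : Fin N → M | ∀ i, i < 0 → z ∈ P i} = Set.univ := by
      ext z; simp
    rw [this]; exact S.defin_univ
  | succ k ih =>
    have h1 := ih (fun i hi => hP i (hi.trans (Nat.lt_succ_self k)))
    have h2 := hP k (Nat.lt_succ_self k)
    have h := S.defin_inter h1 h2
    have heq : {z : Fin N → M | ∀ i, i < k → z ∈ P i} ∩ P k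
        = {z : Fin N → M | ∀ i, i < k + 1 → z ∈ P i} := by
      ext z
      simp only [Set.mem_inter_iff, Set.mem_setOf_eq]
      constructor
      · rintro ⟨hall, hk⟩ i hi
        rcases Nat.lt_succ_iff_lt_or_eq.mp hi with h' | h'
        · exact hall i h'
        · subst h'; exact hk
      · intro hall
        exact ⟨fun i hi => hall i (hi.trans (Nat.lt_succ_self k)),
          hall k (Nat.lt_succ_self k)⟩
    rwa [heq] at h

end OrdStruc

end Toolkit

section Toolkit2

theorem append_apply_left' {M : Type*} {n k : ℕ} (y : Fin n → M) (w : Fin k → M)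
    (i : Fin (n + k)) (j : Fin n) (h : (i : ℕ) = (j : ℕ)) :
    Fin.append y w i = y j := by
  have : i = Fin.castAdd k j := Fin.ext (by simpa using h)
  rw [this, Fin.append_left]

theorem append_apply_right' {M : Type*} {n k : ℕ} (y : Fin n → M) (w : Fin k → M)
    (i : Fin (n + k)) (j : Fin k) (h : (i : ℕ) = n + (j : ℕ)) :
    Fin.append y w i = w j := by
  have : i = Fin.natAdd n j := Fin.ext (by simpa using h)
  rw [this, Fin.append_right]

namespace GrpStruc

variable {M : Type*} [AddCommGroup M] [LinearOrder M] [IsOrderedAddMonoid M] (S : GrpStruc M)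

theorem defin_coordAdd {N : ℕ} (i j k : Fin N) (hij : i ≠ j) (hik : i ≠ k) (hjk : j ≠ k) :
    S.toOrdStruc.defin {z : Fin N → M | z i + z j = z k} := by
  have hinj : Function.Injective ![i, j, k] := by
    intro a b hab
    fin_cases a <;> fin_cases b <;> simp_all
  have h := S.toOrdStruc.defin_pull ![i, j, k] hinj S.defin_add
  have heq : {z : Fin N → M | (fun t => z (![i, j, k] t)) ∈
      {w : Fin 3 → M | w 0 + w 1 = w 2}} = {z : Fin N → M | z i + z j = z k} := by
    ext z; simp
  rwa [heq] at h

theorem defin_lt_add_const {N : ℕ} (i j : Fin N) (hij : i ≠ j) (c : M) :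
    S.toOrdStruc.defin {z : Fin N → M | z i < z j + c} := by
  set i' : Fin (N + 2) := Fin.castAdd 2 i with hi'
  set j' : Fin (N + 2) := Fin.castAdd 2 j with hj'
  set s : Fin (N + 2) := Fin.natAdd N 0 with hs
  set r : Fin (N + 2) := Fin.natAdd N 1 with hr
  have hA : S.toOrdStruc.defin ({z : Fin (N + 2) → M | z r = c} ∩
      ({z : Fin (N + 2) → M | z j' + z r = z s} ∩ {z : Fin (N + 2) → M | z i' < z s})) := by
    refine S.toOrdStruc.defin_inter (S.toOrdStruc.defin_coordEqConst r c)
      (S.toOrdStruc.defin_inter (S.defin_coordAdd j' r s ?_ ?_ ?_)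
        (S.toOrdStruc.defin_coordLt i' s ?_)) <;>
      · intro hcon
        have hval := congrArg Fin.val hcon
        have hiN := i.isLt
        have hjN := j.isLt
        simp only [hi', hj', hs, hr, Fin.coe_castAdd, Fin.coe_natAdd,
          Fin.val_zero, Fin.val_one] at hval
        omega
  have h := S.toOrdStruc.defin_exists (n := N) (k := 2) hA
  have heq : {y : Fin N → M | ∃ w : Fin 2 → M, Fin.append y w ∈
      ({z : Fin (N + 2) → M | z r = c} ∩
      ({z : Fin (N + 2) → M | z j' + z r = z s} ∩ {z : Fin (N + 2) → M | z i' < z s}))}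
      = {z : Fin N → M | z i < z j + c} := by
    ext y
    simp only [Set.mem_setOf_eq, Set.mem_inter_iff]
    constructor
    · rintro ⟨w, h1, h2, h3⟩
      rw [append_apply_right' y w r 1 (by simp [hr])] at h1
      rw [append_apply_right' y w r 1 (by simp [hr]),
        append_apply_right' y w s 0 (by simp [hs]),
        append_apply_left' y w j' j (by simp [hj'])] at h2
      rw [append_apply_right' y w s 0 (by simp [hs]),
        append_apply_left' y w i' i (by simp [hi'])] at h3
      rw [← h2, h1] at h3
      exact h3
    · intro hy
      refine ⟨![y j + c, c], ?_, ?_, ?_⟩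
      · rw [append_apply_right' y _ r 1 (by simp [hr])]
        simp
      · rw [append_apply_right' y _ r 1 (by simp [hr]),
          append_apply_right' y _ s 0 (by simp [hs]),
          append_apply_left' y _ j' j (by simp [hj'])]
        simp
      · rw [append_apply_right' y _ s 0 (by simp [hs]),
          append_apply_left' y _ i' i (by simp [hi'])]
        exact hy
  rwa [heq] at h

theorem defin_const_lt_add {N : ℕ} (i j : Fin N) (hij : i ≠ j) (c : M) :
    S.toOrdStruc.defin {z : Fin N → M | c < z i + z j} := by
  set i' : Fin (N + 2) := Fin.castAdd 2 i with hi'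
  set j' : Fin (N + 2) := Fin.castAdd 2 j with hj'
  set s : Fin (N + 2) := Fin.natAdd N 0 with hs
  set r : Fin (N + 2) := Fin.natAdd N 1 with hr
  have hA : S.toOrdStruc.defin ({z : Fin (N + 2) → M | z r = c} ∩
      ({z : Fin (N + 2) → M | z i' + z j' = z s} ∩ {z : Fin (N + 2) → M | z r < z s})) := by
    refine S.toOrdStruc.defin_inter (S.toOrdStruc.defin_coordEqConst r c)
      (S.toOrdStruc.defin_inter (S.defin_coordAdd i' j' s ?_ ?_ ?_)
        (S.toOrdStruc.defin_coordLt r s ?_)) <;>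
      · intro hcon
        have hval := congrArg Fin.val hcon
        have hiN := i.isLt
        have hjN := j.isLt
        simp only [hi', hj', hs, hr, Fin.coe_castAdd, Fin.coe_natAdd,
          Fin.val_zero, Fin.val_one] at hval
        first
          | omega
          | exact hij (Fin.ext hval)
  have h := S.toOrdStruc.defin_exists (n := N) (k := 2) hA
  have heq : {y : Fin N → M | ∃ w : Fin 2 → M, Fin.append y w ∈
      ({z : Fin (N + 2) → M | z r = c} ∩
      ({z : Fin (N + 2) → M | z i' + z j' = z s} ∩ {z : Fin (N + 2) → M | z r < z s}))}
      = {z : Fin N → M | c < z i + z j} := by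
    ext y
    simp only [Set.mem_setOf_eq, Set.mem_inter_iff]
    constructor
    · rintro ⟨w, h1, h2, h3⟩
      rw [append_apply_right' y w r 1 (by simp [hr])] at h1
      rw [append_apply_right' y w s 0 (by simp [hs]),
        append_apply_left' y w i' i (by simp [hi']),
        append_apply_left' y w j' j (by simp [hj'])] at h2
      rw [append_apply_right' y w s 0 (by simp [hs]),
        append_apply_right' y w r 1 (by simp [hr])] at h3
      rw [h1] at h3
      rw [← h2] at h3
      exact h3
    · intro hy
      refine ⟨![y i + y j, c], ?_, ?_, ?_⟩
      · rw [append_apply_right' y _ r 1 (by simp [hr])]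
        simp
      · rw [append_apply_right' y _ s 0 (by simp [hs]),
          append_apply_left' y _ i' i (by simp [hi']),
          append_apply_left' y _ j' j (by simp [hj'])]
        simp
      · rw [append_apply_right' y _ s 0 (by simp [hs]),
          append_apply_right' y _ r 1 (by simp [hr])]
        exact hy
  rwa [heq] at h

theorem defin_const_lt {N : ℕ} (j : Fin N) (c : M) :
    S.toOrdStruc.defin {z : Fin N → M | c < z j} := by
  set j' : Fin (N + 1) := Fin.castAdd 1 j with hj'
  set r : Fin (N + 1) := Fin.natAdd N 0 with hr
  have hA : S.toOrdStruc.defin ({z : Fin (N + 1) → M | z r = c} ∩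
      {z : Fin (N + 1) → M | z r < z j'}) := by
    refine S.toOrdStruc.defin_inter (S.toOrdStruc.defin_coordEqConst r c)
      (S.toOrdStruc.defin_coordLt r j' ?_)
    intro hcon
    have hval := congrArg Fin.val hcon
    have hjN := j.isLt
    simp only [hj', hr, Fin.coe_castAdd, Fin.coe_natAdd, Fin.val_zero] at hval
    omega
  have h := S.toOrdStruc.defin_exists (n := N) (k := 1) hA
  have heq : {y : Fin N → M | ∃ w : Fin 1 → M, Fin.append y w ∈
      ({z : Fin (N + 1) → M | z r = c} ∩ {z : Fin (N + 1) → M | z r < z j'})}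
      = {z : Fin N → M | c < z j} := by
    ext y
    simp only [Set.mem_setOf_eq, Set.mem_inter_iff]
    constructor
    · rintro ⟨w, h1, h2⟩
      rw [append_apply_right' y w r 0 (by simp [hr])] at h1
      rw [append_apply_right' y w r 0 (by simp [hr]),
        append_apply_left' y w j' j (by simp [hj'])] at h2
      rwa [h1] at h2
    · intro hy
      refine ⟨![c], ?_, ?_⟩
      · rw [append_apply_right' y _ r 0 (by simp [hr])]
        simp
      · rw [append_apply_right' y _ r 0 (by simp [hr]),
          append_apply_left' y _ j' j (by simp [hj'])]
        exact hy
  rwa [heq] at h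

end GrpStruc

end Toolkit2

section LSet

open OrdStruc

theorem defin_Lset {M : Type*} [AddCommGroup M] [LinearOrder M] [IsOrderedAddMonoid M] (S : GrpStruc M) {m : ℕ}
    (C : Set (Fin m → M)) (φ : (Fin m → M) → M)
    (hG : S.toOrdStruc.defin {z : Fin (m + 1) → M |
      Fin.init z ∈ C ∧ z (Fin.last m) = φ (Fin.init z)})
    (k : Fin m) (c : Fin m → M) :
    S.toOrdStruc.defin1 {u : M | ∃ t, 0 < t ∧ ∀ x ∈ C, φ x < t →
      (∀ i : Fin m, (i : ℕ) < (k : ℕ) → |x i - c i| < t) → u ≤ x k} := by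
  classical
  set G : Set (Fin (m + 1) → M) := {z : Fin (m + 1) → M |
    Fin.init z ∈ C ∧ z (Fin.last m) = φ (Fin.init z)} with hGdef
  -- index names in Fin (2 + (m + 1))
  set pρ : Fin (m + 1) → Fin (2 + (m + 1)) := fun i => Fin.natAdd 2 i with hpρ
  set px : Fin m → Fin (2 + (m + 1)) := fun i => pρ i.castSucc with hpx
  set pv : Fin (2 + (m + 1)) := pρ (Fin.last m) with hpv
  set pu : Fin (2 + (m + 1)) := Fin.castAdd (m + 1) (0 : Fin 2) with hpu
  set pt : Fin (2 + (m + 1)) := Fin.castAdd (m + 1) (1 : Fin 2) with hpt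
  have hpρval : ∀ i : Fin (m + 1), (pρ i : ℕ) = 2 + (i : ℕ) := fun i => rfl
  have hpxval : ∀ i : Fin m, (px i : ℕ) = 2 + (i : ℕ) := fun i => rfl
  have hpvval : (pv : ℕ) = 2 + m := rfl
  have hpuval : (pu : ℕ) = 0 := rfl
  have hptval : (pt : ℕ) = 1 := rfl
  -- the conjuncts
  set Pi : ℕ → Set (Fin (2 + (m + 1)) → M) := fun i =>
    if h : i < m then
      {z | z (px ⟨i, h⟩) < z pt + c ⟨i, h⟩} ∩ {z | c ⟨i, h⟩ < z pt + z (px ⟨i, h⟩)}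
    else Set.univ with hPi
  have hPidef : ∀ i, i < (k : ℕ) → S.toOrdStruc.defin (Pi i) := by
    intro i hi
    have him : i < m := hi.trans k.isLt
    rw [hPi]
    simp only [dif_pos him]
    refine S.toOrdStruc.defin_inter ?_ ?_
    · refine S.defin_lt_add_const (px ⟨i, him⟩) pt ?_ (c ⟨i, him⟩)
      intro hcon
      have := congrArg Fin.val hcon
      rw [hpxval, hptval] at this
      omega
    · refine S.defin_const_lt_add pt (px ⟨i, him⟩) ?_ (c ⟨i, him⟩)
      intro hcon
      have := congrArg Fin.val hcon
      rw [hpxval, hptval] at this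
      omega
  have hInner : S.toOrdStruc.defin
      ({z : Fin (2 + (m + 1)) → M | (fun i => z (pρ i)) ∈ G} ∩
        ({z | z pv < z pt} ∩
          ({z | ∀ i, i < (k : ℕ) → z ∈ Pi i} ∩ {z | z (px k) < z pu}))) := by
    refine S.toOrdStruc.defin_inter ?_ (S.toOrdStruc.defin_inter ?_
      (S.toOrdStruc.defin_inter ?_ ?_))
    · refine S.toOrdStruc.defin_pull pρ ?_ hG
      intro a b hab
      have := congrArg Fin.val hab
      rw [hpρval, hpρval] at this
      exact Fin.ext (by omega)
    · refine S.toOrdStruc.defin_coordLt pv pt ?_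
      intro hcon
      have := congrArg Fin.val hcon
      rw [hpvval, hptval] at this
      omega
    · exact S.toOrdStruc.defin_forall_lt (k : ℕ) Pi hPidef
    · refine S.toOrdStruc.defin_coordLt (px k) pu ?_
      intro hcon
      have := congrArg Fin.val hcon
      rw [hpxval, hpuval] at this
      omega
  set Inner : Set (Fin (2 + (m + 1)) → M) :=
      {z : Fin (2 + (m + 1)) → M | (fun i => z (pρ i)) ∈ G} ∩
        ({z | z pv < z pt} ∩
          ({z | ∀ i, i < (k : ℕ) → z ∈ Pi i} ∩ {z | z (px k) < z pu})) with hInnerDef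
  have hE2 := S.toOrdStruc.defin_exists (n := 2) (k := m + 1) hInner
  set E2 : Set (Fin 2 → M) :=
      {y : Fin 2 → M | ∃ w : Fin (m + 1) → M, Fin.append y w ∈ Inner} with hE2def
  -- semantic characterization of E2
  have hE2mem : ∀ y : Fin 2 → M, y ∈ E2 ↔
      ∃ x, x ∈ C ∧ (φ x < y 1 ∧
        ((∀ i : Fin m, (i : ℕ) < (k : ℕ) → (x i < y 1 + c i ∧ c i < y 1 + x i)) ∧
          x k < y 0)) := by
    intro y
    constructor
    · rintro ⟨w, hGm, hvt, hnear, hlt⟩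
      have e1 : (fun i => Fin.append y w (pρ i)) = w :=
        funext fun i => append_apply_right' y w (pρ i) i (hpρval i)
      have e3 : Fin.append y w pt = y 1 := append_apply_left' y w pt 1 hptval
      have e4 : Fin.append y w pu = y 0 := append_apply_left' y w pu 0 hpuval
      have e5 : ∀ i : Fin m, Fin.append y w (px i) = w i.castSucc :=
        fun i => append_apply_right' y w (px i) i.castSucc (hpxval i)
      have e2 : Fin.append y w pv = w (Fin.last m) :=
        append_apply_right' y w pv (Fin.last m) hpvval
      rw [Set.mem_setOf_eq, e1] at hGm
      obtain ⟨hwC, hwφ⟩ := hGm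
      refine ⟨Fin.init w, hwC, ?_, ?_, ?_⟩
      · rw [Set.mem_setOf_eq, e2, e3, hwφ] at hvt
        exact hvt
      · intro i hi
        have him : (i : ℕ) < m := i.isLt
        have hPii := hnear (i : ℕ) hi
        rw [hPi] at hPii
        simp only [dif_pos him] at hPii
        have hieq : (⟨(i : ℕ), him⟩ : Fin m) = i := Fin.ext rfl
        rw [hieq] at hPii
        obtain ⟨h1, h2⟩ := hPii
        rw [Set.mem_setOf_eq, e5, e3] at h1
        rw [Set.mem_setOf_eq, e5, e3] at h2
        exact ⟨h1, h2⟩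
      · rw [Set.mem_setOf_eq, e5, e4] at hlt
        exact hlt
    · rintro ⟨x, hxC, hφx, hnear, hlt⟩
      refine ⟨Fin.snoc x (φ x), ?_, ?_, ?_, ?_⟩
      · have e1 : (fun i => Fin.append y (Fin.snoc x (φ x)) (pρ i)) = Fin.snoc x (φ x) :=
          funext fun i => append_apply_right' y _ (pρ i) i (hpρval i)
        rw [Set.mem_setOf_eq, e1]
        refine ⟨?_, ?_⟩
        · rw [Fin.init_snoc]; exact hxC
        · rw [Fin.snoc_last, Fin.init_snoc]
      · rw [Set.mem_setOf_eq,
          append_apply_right' y _ pv (Fin.last m) hpvval,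
          append_apply_left' y _ pt 1 hptval, Fin.snoc_last]
        exact hφx
      · intro i hi
        have him : i < m := hi.trans k.isLt
        rw [hPi]
        simp only [dif_pos him]
        refine ⟨?_, ?_⟩
        · rw [Set.mem_setOf_eq,
            append_apply_right' y _ (px ⟨i, him⟩) (Fin.castSucc ⟨i, him⟩) (hpxval _),
            append_apply_left' y _ pt 1 hptval, Fin.snoc_castSucc]
          exact (hnear ⟨i, him⟩ hi).1
        · rw [Set.mem_setOf_eq,
            append_apply_right' y _ (px ⟨i, him⟩) (Fin.castSucc ⟨i, him⟩) (hpxval _),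
            append_apply_left' y _ pt 1 hptval, Fin.snoc_castSucc]
          exact (hnear ⟨i, him⟩ hi).2
      · rw [Set.mem_setOf_eq,
          append_apply_right' y _ (px k) k.castSucc (hpxval k),
          append_apply_left' y _ pu 0 hpuval, Fin.snoc_castSucc]
        exact hlt
  -- F and L1
  have hPos : S.toOrdStruc.defin {y : Fin 2 → M | (0 : M) < y 1} :=
    S.defin_const_lt (1 : Fin 2) 0
  have hF : S.toOrdStruc.defin ({y : Fin 2 → M | (0 : M) < y 1} ∩ E2ᶜ) :=
    S.toOrdStruc.defin_inter hPos (S.toOrdStruc.defin_compl hE2)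
  have hL1 := S.toOrdStruc.defin_exists (n := 1) (k := 1) hF
  -- final set equality
  have hfinal : {z : Fin 1 → M | z 0 ∈ {u : M | ∃ t, 0 < t ∧ ∀ x ∈ C, φ x < t →
      (∀ i : Fin m, (i : ℕ) < (k : ℕ) → |x i - c i| < t) → u ≤ x k}}
      = {y : Fin 1 → M | ∃ w : Fin 1 → M,
          Fin.append y w ∈ {y : Fin 2 → M | (0 : M) < y 1} ∩ E2ᶜ} := by
    ext y
    simp only [Set.mem_setOf_eq]
    constructor
    · rintro ⟨t, ht, hall⟩
      refine ⟨fun _ => t, ?_, ?_⟩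
      · rw [Set.mem_setOf_eq, append_apply_right' y _ 1 0 (by simp)]
        exact ht
      · rw [Set.mem_compl_iff, hE2mem]
        rintro ⟨x, hxC, hφx, hnear, hlt⟩
        rw [append_apply_right' y _ 1 0 (by simp)] at hφx hnear
        rw [append_apply_left' y _ 0 0 (by simp)] at hlt
        have := hall x hxC hφx (fun i hi => abs_sub_lt_iff.mpr
          ⟨sub_lt_iff_lt_add.mpr (hnear i hi).1, sub_lt_iff_lt_add.mpr (hnear i hi).2⟩)
        exact absurd hlt (not_lt.mpr this)
    · rintro ⟨w, hw0, hwE⟩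
      rw [Set.mem_setOf_eq, append_apply_right' y _ 1 0 (by simp)] at hw0
      rw [Set.mem_compl_iff, hE2mem] at hwE
      refine ⟨w 0, hw0, ?_⟩
      intro x hxC hφx hnear
      by_contra hle
      apply hwE
      refine ⟨x, hxC, ?_, ?_, ?_⟩
      · rw [append_apply_right' y _ 1 0 (by simp)]
        exact hφx
      · rw [append_apply_right' y _ 1 0 (by simp)]
        intro i hi
        exact ⟨sub_lt_iff_lt_add.mp (abs_sub_lt_iff.mp (hnear i hi)).1,
          sub_lt_iff_lt_add.mp (abs_sub_lt_iff.mp (hnear i hi)).2⟩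
      · rw [append_apply_left' y _ 0 0 (by simp)]
        exact not_le.mp hle
  rw [OrdStruc.defin1, hfinal]
  exact hL1

end LSet

section VnormLemmas

theorem le_foldr_max {M : Type*} [LinearOrder M] {a : M} :
    ∀ {l : List M} (b : M), a ∈ l → a ≤ l.foldr max b
  | [], _, h => absurd h List.not_mem_nil
  | (c :: l), b, h => by
    rcases List.mem_cons.mp h with h | h
    · subst h; exact le_max_left _ _
    · exact (le_foldr_max b h).trans (le_max_right _ _)

theorem foldr_max_lt {M : Type*} [LinearOrder M] {r : M} :
    ∀ {l : List M} {b : M}, b < r → (∀ a ∈ l, a < r) → l.foldr max b < r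
  | [], _, hb, _ => hb
  | (c :: l), _, hb, h => max_lt (h c List.mem_cons_self)
      (foldr_max_lt hb (fun a ha => h a (List.mem_cons_of_mem c ha)))

theorem abs_le_vnorm {M : Type*} [AddCommGroup M] [LinearOrder M] [IsOrderedAddMonoid M] {n : ℕ}
    (x : Fin n → M) (i : Fin n) : |x i| ≤ vnorm x :=
  le_foldr_max 0 (by rw [List.mem_ofFn]; exact ⟨i, rfl⟩)

theorem vnorm_lt_of {M : Type*} [AddCommGroup M] [LinearOrder M] [IsOrderedAddMonoid M] {n : ℕ} {x : Fin n → M}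
    {r : M} (hr : 0 < r) (h : ∀ i, |x i| < r) : vnorm x < r := by
  refine foldr_max_lt hr ?_
  intro a ha
  rw [List.mem_ofFn] at ha
  obtain ⟨i, rfl⟩ := ha
  exact h i

end VnormLemmas


/-- Lemma 3.1: if `φ, ψ : C → M_{>0}` are definable, `C` definable closed bounded, and
near every `x ∈ C` one has `φ(x') ≥ ψ(x)`, then `inf φ(C) > 0`. -/
theorem pos_inf_of_locally_bounded_below
    {M : Type*} [AddCommGroup M] [LinearOrder M] [IsOrderedAddMonoid M] [DenselyOrdered M] [Nontrivial M]
    [TopologicalSpace M] [OrderTopology M]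
    (S : GrpStruc M) (hDC : DefinablyComplete S.toOrdStruc)
    (hLO : LocallyOMinimal S.toOrdStruc)
    {m : ℕ} (C : Set (Fin m → M)) (hCdef : S.defin C) (hCcl : IsClosed C) (hCbdd : VBdd C)
    (φ ψ : (Fin m → M) → M)
    (hφdef : S.toOrdStruc.DefinableFunOn C φ) (hψdef : S.toOrdStruc.DefinableFunOn C ψ)
    (hφpos : ∀ x ∈ C, 0 < φ x) (hψpos : ∀ x ∈ C, 0 < ψ x)
    (h : ∀ x ∈ C, ∃ δ > (0 : M), ∀ x' ∈ C, vnorm (x' - x) < δ → ψ x ≤ φ x') :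
    ∃ b > (0 : M), ∀ x ∈ C, b ≤ φ x := by
    classical
  obtain ⟨a0, b0, hab⟩ := exists_pair_ne M
  obtain ⟨p, hp⟩ : ∃ p : M, 0 < p := by
    rcases hab.lt_or_gt with h' | h'
    · exact ⟨b0 - a0, sub_pos.mpr h'⟩
    · exact ⟨a0 - b0, sub_pos.mpr h'⟩
  by_contra hcon
  push_neg at hcon
  obtain ⟨r, hr⟩ := hCbdd
  have key : ∀ k : ℕ, k ≤ m → ∃ cc : Fin m → M, ∀ t, 0 < t →
      ∃ x, x ∈ C ∧ φ x < t ∧ ∀ i : Fin m, (i : ℕ) < k → |x i - cc i| < t := by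
    intro k
    induction k with
    | zero =>
      intro _
      refine ⟨fun _ => 0, fun t ht => ?_⟩
      obtain ⟨x, hxC, hφx⟩ := hcon t ht
      exact ⟨x, hxC, hφx, fun i hi => absurd hi (Nat.not_lt_zero _)⟩
    | succ k ih =>
      intro hkm
      obtain ⟨cc, hcc⟩ := ih (Nat.le_of_succ_le hkm)
      have hkm' : k < m := hkm
      set kF : Fin m := ⟨k, hkm'⟩ with hkF
      set L : Set M := {u : M | ∃ t, 0 < t ∧ ∀ x ∈ C, φ x < t →
        (∀ i : Fin m, (i : ℕ) < (kF : ℕ) → |x i - cc i| < t) → u ≤ x kF} with hL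
      have hLdef : S.toOrdStruc.defin1 L := defin_Lset S C φ hφdef kF cc
      have hLne : L.Nonempty := by
        refine ⟨-r, p, hp, fun x hxC _ _ => ?_⟩
        have h1 : |x kF| ≤ vnorm x := abs_le_vnorm x kF
        have h2 := hr x hxC
        exact (abs_lt.mp (h1.trans_lt h2)).1.le
      have hLbdd : BddAbove L := by
        refine ⟨r, fun u hu => ?_⟩
        obtain ⟨t, ht, hall⟩ := hu
        obtain ⟨x, hxC, hφx, hnear⟩ := hcc t ht
        have h1 := hall x hxC hφx (fun i hi => hnear i hi)
        have h2 : x kF ≤ |x kF| := le_abs_self _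
        have h3 : |x kF| ≤ vnorm x := abs_le_vnorm x kF
        exact h1.trans (h2.trans (h3.trans (hr x hxC).le))
      obtain ⟨b, hb⟩ := (hDC L hLdef hLne).1 hLbdd
      refine ⟨Function.update cc kF b, fun t ht => ?_⟩
      have h1 : ∃ u ∈ L, b - t < u := by
        by_contra hno
        push_neg at hno
        have hle : b ≤ b - t := hb.2 (fun u hu => hno u hu)
        have hlt : b - t < b := sub_lt_self b ht
        exact absurd (hle.trans_lt hlt) (lt_irrefl b)
      obtain ⟨u, huL, hub⟩ := h1
      obtain ⟨t₀, ht₀, hu⟩ := huL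
      have hs : 0 < min t t₀ := lt_min ht ht₀
      have h2 : ∃ x, x ∈ C ∧ φ x < min t t₀ ∧
          ((∀ i : Fin m, (i : ℕ) < (kF : ℕ) → |x i - cc i| < min t t₀) ∧ x kF < b + t) := by
        by_contra hno
        push_neg at hno
        have hmem : b + t ∈ L := by
          refine ⟨min t t₀, hs, fun x hxC hφx hnear => ?_⟩
          exact hno x hxC hφx hnear
        have := hb.1 hmem
        exact absurd this (not_le.mpr (lt_add_of_pos_right b ht))
      obtain ⟨x, hxC, hφx, hnear, hupper⟩ := h2
      have hlow : u ≤ x kF := hu x hxC (hφx.trans_le (min_le_right _ _))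
        (fun i hi => (hnear i hi).trans_le (min_le_right _ _))
      refine ⟨x, hxC, hφx.trans_le (min_le_left _ _), fun i hi => ?_⟩
      rcases Nat.lt_succ_iff_lt_or_eq.mp hi with h' | h'
      · have hne : i ≠ kF := by
          intro hcon2
          rw [hcon2] at h'
          exact absurd h' (lt_irrefl _)
        rw [Function.update_of_ne hne]
        exact (hnear i h').trans_le (min_le_left _ _)
      · have hik : i = kF := Fin.ext h'
        rw [hik, Function.update_self, abs_sub_lt_iff]
        constructor
        · rw [add_comm] at hupper
          exact sub_lt_iff_lt_add.mpr hupper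
        · exact sub_lt_comm.mp (hub.trans_le hlow)
  obtain ⟨cc, hcc⟩ := key m le_rfl
  have hccC : cc ∈ C := by
    by_contra hcC
    have hopen : IsOpen Cᶜ := hCcl.isOpen_compl
    obtain ⟨I, U, hU, hsub⟩ := isOpen_pi_iff.mp hopen cc hcC
    rcases Nat.eq_zero_or_pos m with hm | hm
    · obtain ⟨x, hxC, _, _⟩ := hcc p hp
      have hxc : x = cc := funext fun i => absurd i.isLt (by omega)
      exact hcC (hxc ▸ hxC)
    · have hInt : ∀ i : Fin m, ∃ l u' : M, l < cc i ∧ cc i < u' ∧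
          (i ∈ I → Set.Ioo l u' ⊆ U i) := by
        intro i
        by_cases hiI : i ∈ I
        · have hnb : U i ∈ nhds (cc i) := (hU i hiI).1.mem_nhds (hU i hiI).2
          obtain ⟨l, u', hmem, hss⟩ := (mem_nhds_iff_exists_Ioo_subset'
            ⟨cc i - p, sub_lt_self _ hp⟩ ⟨cc i + p, lt_add_of_pos_right _ hp⟩).mp hnb
          exact ⟨l, u', hmem.1, hmem.2, fun _ => hss⟩
        · exact ⟨cc i - p, cc i + p, sub_lt_self _ hp, lt_add_of_pos_right _ hp,
            fun h' => absurd h' hiI⟩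
      choose l u' hl hu' hss using hInt
      haveI : Nonempty (Fin m) := ⟨⟨0, hm⟩⟩
      have hne : (Finset.univ : Finset (Fin m)).Nonempty := Finset.univ_nonempty
      set ε := Finset.univ.inf' hne (fun i => min (cc i - l i) (u' i - cc i)) with hε
      have hεpos : 0 < ε := by
        rw [hε, Finset.lt_inf'_iff]
        exact fun i _ => lt_min (sub_pos.mpr (hl i)) (sub_pos.mpr (hu' i))
      obtain ⟨x, hxC, _, hnear⟩ := hcc ε hεpos
      have hxmem : x ∈ (I : Set (Fin m)).pi U := by
        intro i hiI
        apply hss i hiI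
        have h1 := hnear i i.isLt
        have h2 : ε ≤ min (cc i - l i) (u' i - cc i) := Finset.inf'_le _ (Finset.mem_univ i)
        rw [abs_sub_lt_iff] at h1
        constructor
        · have h3 : cc i - x i < cc i - l i := h1.2.trans_le (h2.trans (min_le_left _ _))
          exact (sub_lt_sub_iff_left (cc i)).mp h3
        · have h3 : x i - cc i < u' i - cc i := h1.1.trans_le (h2.trans (min_le_right _ _))
          exact (sub_lt_sub_iff_right (cc i)).mp h3
      exact absurd (hsub hxmem) (not_not_intro hxC)
  obtain ⟨δ, hδ, hδp⟩ := h cc hccC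
  have hψc := hψpos cc hccC
  have ht : 0 < min δ (ψ cc) := lt_min hδ hψc
  obtain ⟨x, hxC, hφx, hnear⟩ := hcc (min δ (ψ cc)) ht
  have hv : vnorm (x - cc) < δ := by
    refine vnorm_lt_of hδ ?_
    intro i
    have h1 : |(x - cc) i| < min δ (ψ cc) := by
      rw [Pi.sub_apply]
      exact hnear i i.isLt
    exact h1.trans_le (min_le_left _ _)
  have hge := hδp x hxC hv
  have hlt2 : φ x < ψ cc := hφx.trans_le (min_le_right _ _)
  exact absurd hge (not_le.mpr hlt2)
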